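/- arXiv:1912.13212 — 3 statements merged into one kernel-verified Lean document; each statement's English description precedes it below -/
import Mathlib

section
/- Let X have the anomalous distribution with density c₃ exp(−α₂ x) on [a_{2n}, a_{2n+1}) and c₃ exp(−α₁ x) on [a_{2n−1}, a_{2n}), where 0 < α₁ < α₂, a₀ = 0, a_{n+1} = 2^{a_n}. Then there exist constants c₄, c₅ > 0 such that for all sufficiently large t, c₄ exp(−α₂ t) ≤ P(X > t) ≤ c₅ exp(−α₁ t). -/
open MeasureTheory

/-- The sequence a₀ = 0, a_{n+1} = 2^{a_n}. -/
noncomputable def aseq : ℕ → ℝ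
  | 0 => 0
  | n + 1 => (2 : ℝ) ^ (aseq n)

-- The unnormalized density of the anomalous distribution: `exp (-α₂ x)` on the
-- intervals `[a_{2n}, a_{2n+1})`, `exp (-α₁ x)` on the intervals `[a_{2n-1}, a_{2n})`
-- (these two families of intervals cover `[0, ∞)`), and zero on the negative reals.
open Classical in
noncomputable def anomDensity (α₁ α₂ : ℝ) (x : ℝ) : ℝ :=
  if x < 0 then 0
  else if ∃ n : ℕ, aseq (2 * n) ≤ x ∧ x < aseq (2 * n + 1) then Real.exp (-α₂ * x)
  else Real.exp (-α₁ * x)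

lemma anomDensity_bounds {α₁ α₂ : ℝ} (h₁₂ : α₁ ≤ α₂) {x : ℝ} (hx : 0 ≤ x) :
    Real.exp (-α₂ * x) ≤ anomDensity α₁ α₂ x ∧
      anomDensity α₁ α₂ x ≤ Real.exp (-α₁ * x) := by
  unfold anomDensity
  rw [if_neg (not_lt.2 hx)]
  have hle : Real.exp (-α₂ * x) ≤ Real.exp (-α₁ * x) :=
    Real.exp_le_exp.2 (by nlinarith)
  split <;> exact ⟨le_rfl.trans (by linarith), by linarith⟩

lemma integral_exp_neg_mul_Ioi {b : ℝ} (hb : 0 < b) (t : ℝ) :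
    ∫ x in Set.Ioi t, Real.exp (-b * x) = Real.exp (-b * t) / b := by
  have h := MeasureTheory.integral_Ioi_of_hasDerivAt_of_tendsto
    (f := fun x => -Real.exp (-b * x) / b) (f' := fun x => Real.exp (-b * x))
    (a := t) (m := 0)
    (by
      apply ContinuousWithinAt.div_const
      exact ((Real.continuous_exp.comp (continuous_const.mul continuous_id)).neg).continuousWithinAt)
    (fun x _ => by
      have : HasDerivAt (fun x => -Real.exp (-b * x) / b) (Real.exp (-b * x)) x := by
        have h1 : HasDerivAt (fun x : ℝ => -b * x) (-b) x := by
          simpa using (hasDerivAt_id x).const_mul (-b)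
        have h2 := (h1.exp).neg.div_const b
        exact h2.congr_deriv (by rw [div_eq_iff hb.ne']; ring)
      exact this)
    (exp_neg_integrableOn_Ioi t hb)
    (by
      have h1 : Filter.Tendsto (fun x : ℝ => -b * x) Filter.atTop Filter.atBot := by
        have : Filter.Tendsto (fun x : ℝ => b * x) Filter.atTop Filter.atTop :=
          Filter.Tendsto.const_mul_atTop hb Filter.tendsto_id
        simpa [neg_mul] using Filter.tendsto_neg_atBot_iff.2 this
      have := Real.tendsto_exp_atBot.comp h1
      simpa [Function.comp, neg_div] using this.div_const b |>.neg)
  have : (0 : ℝ) - -Real.exp (-b * t) / b = Real.exp (-b * t) / b := by ring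
  rw [h, this]

theorem anom_two_sided_tail {Ω : Type*} [MeasurableSpace Ω]
    (μ : Measure Ω) [IsProbabilityMeasure μ]
    (α₁ α₂ c₃ : ℝ) (h₁ : 0 < α₁) (h₁₂ : α₁ < α₂) (hc₃ : 0 < c₃)
    (hnorm : ∫ x in Set.Ici (0 : ℝ), c₃ * anomDensity α₁ α₂ x = 1)
    (X : Ω → ℝ) (hX : Measurable X)
    (hmap : Measure.map X μ =
      volume.withDensity (fun x => ENNReal.ofReal (c₃ * anomDensity α₁ α₂ x))) :
    ∃ c₄ > 0, ∃ c₅ > 0, ∀ᶠ t in Filter.atTop,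
      c₄ * Real.exp (-α₂ * t) ≤ (μ {ω | t < X ω}).toReal ∧
      (μ {ω | t < X ω}).toReal ≤ c₅ * Real.exp (-α₁ * t) := by
  have h₂ : (0 : ℝ) < α₂ := h₁.trans h₁₂
  refine ⟨c₃ / α₂, by positivity, c₃ / α₁, by positivity, ?_⟩
  filter_upwards [Filter.eventually_ge_atTop (0 : ℝ)] with t ht
  have hset : {ω | t < X ω} = X ⁻¹' Set.Ioi t := rfl
  have hμ : μ {ω | t < X ω}
      = ∫⁻ x in Set.Ioi t, ENNReal.ofReal (c₃ * anomDensity α₁ α₂ x) := by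
    rw [hset, ← Measure.map_apply hX measurableSet_Ioi, hmap,
      withDensity_apply _ measurableSet_Ioi]
  -- pointwise bounds on `Ioi t`
  have hbound : ∀ x ∈ Set.Ioi t,
      ENNReal.ofReal (c₃ * Real.exp (-α₂ * x))
        ≤ ENNReal.ofReal (c₃ * anomDensity α₁ α₂ x) ∧
      ENNReal.ofReal (c₃ * anomDensity α₁ α₂ x)
        ≤ ENNReal.ofReal (c₃ * Real.exp (-α₁ * x)) := by
    intro x hx
    have hx0 : (0 : ℝ) ≤ x := ht.trans (le_of_lt hx)
    obtain ⟨hl, hu⟩ := anomDensity_bounds h₁₂.le hx0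
    exact ⟨ENNReal.ofReal_le_ofReal (by nlinarith),
      ENNReal.ofReal_le_ofReal (by nlinarith)⟩
  -- compute the exponential lintegrals
  have hcalc : ∀ b : ℝ, 0 < b →
      ∫⁻ x in Set.Ioi t, ENNReal.ofReal (c₃ * Real.exp (-b * x))
        = ENNReal.ofReal (c₃ / b * Real.exp (-b * t)) := by
    intro b hb
    have hint : MeasureTheory.IntegrableOn (fun x => c₃ * Real.exp (-b * x))
        (Set.Ioi t) := (exp_neg_integrableOn_Ioi t hb).const_mul c₃
    rw [← MeasureTheory.ofReal_integral_eq_lintegral_ofReal hint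
      (Filter.Eventually.of_forall fun x => by positivity)]
    congr 1
    rw [MeasureTheory.integral_const_mul, integral_exp_neg_mul_Ioi hb]
    ring
  have hlow := (hcalc α₂ h₂) ▸ MeasureTheory.lintegral_mono_ae
    ((MeasureTheory.ae_restrict_iff' measurableSet_Ioi).2
      (Filter.Eventually.of_forall fun x hx => (hbound x hx).1))
  have hhigh := (hcalc α₁ h₁) ▸ MeasureTheory.lintegral_mono_ae
    ((MeasureTheory.ae_restrict_iff' measurableSet_Ioi).2
      (Filter.Eventually.of_forall fun x hx => (hbound x hx).2))
  rw [← hμ] at hlow hhigh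
  constructor
  · have := ENNReal.toReal_mono (measure_ne_top μ _) hlow
    rwa [ENNReal.toReal_ofReal (by positivity)] at this
  · have := ENNReal.toReal_mono ENNReal.ofReal_ne_top hhigh
    rwa [ENNReal.toReal_ofReal (by positivity)] at this
end

section
/- Let f : (0,∞) → (0,∞) be slowly varying, i.e. for all a > 0, lim_{t→∞} f(at)/f(t) = 1. Then for any constants 0 < λ < 1 and any C > 1, the convergence f(at)/f(t) → 1 holds uniformly in a ∈ [λ, C] (local uniform convergence of slowly varying functions). -/
open Filter

theorem slowly_varying_locally_uniform (f : ℝ → ℝ) (hf : Measurable f)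
    (hpos : ∀ t > 0, 0 < f t)
    (hsv : ∀ a > 0, Tendsto (fun t => f (a * t) / f t) atTop (nhds 1))
    (lam C : ℝ) (hlam0 : 0 < lam) (hlam1 : lam < 1) (hC : 1 < C) :
    TendstoUniformlyOn (fun t a => f (a * t) / f t) (fun _ => 1) atTop
      (Set.Icc lam C) := by
  classical
  by_contra hcon
  rw [Metric.tendstoUniformlyOn_iff] at hcon
  push_neg at hcon
  obtain ⟨ε, hε, hfreq⟩ := hcon
  -- extract a bad sequence
  have key : ∀ k : ℕ, ∃ t : ℝ, (k : ℝ) + 1 ≤ t ∧ ∃ a, a ∈ Set.Icc lam C ∧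
      ε ≤ |f (a * t) / f t - 1| := by
    intro k
    obtain ⟨n, hn, hx⟩ := frequently_atTop.mp hfreq ((k : ℝ) + 1)
    obtain ⟨a, ha, hd⟩ := hx
    refine ⟨n, hn, a, ha, ?_⟩
    simpa [Real.dist_eq, abs_sub_comm] using hd
  choose T hT A hA hbad using key
  have hTpos : ∀ k, 0 < T k := fun k =>
    lt_of_lt_of_le (by positivity) (hT k)
  have hTtop : Tendsto T atTop atTop := by
    refine tendsto_atTop_mono hT ?_
    exact tendsto_atTop_add_const_right _ 1 tendsto_natCast_atTop_atTop
  have hApos : ∀ k, 0 < A k := fun k => lt_of_lt_of_le hlam0 (hA k).1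
  have hATtop : Tendsto (fun k => A k * T k) atTop atTop := by
    refine tendsto_atTop_mono (fun k => ?_) (hTtop.const_mul_atTop hlam0)
    exact mul_le_mul_of_nonneg_right (hA k).1 (hTpos k).le
  set ℓ := Real.log lam with hℓdef
  set M := Real.log C with hMdef
  have hℓ : ℓ < 0 := Real.log_neg hlam0 hlam1
  have hM : 0 < M := Real.log_pos hC
  set I := M - ℓ with hIdef
  have hIpos : 0 < I := by simp only [hIdef]; linarith
  set D : Set ℝ := Set.Icc 0 (3 * I) with hDdef
  have hDmeas : MeasurableSet D := measurableSet_Icc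
  have hDvol : MeasureTheory.volume D = ENNReal.ofReal (3 * I) := by
    rw [hDdef, Real.volume_Icc, sub_zero]
  have hDfin : MeasureTheory.volume D ≠ ⊤ := by
    rw [hDvol]; exact ENNReal.ofReal_ne_top
  -- Egorov for the first family
  obtain ⟨t₁, ht₁D, ht₁m, ht₁μ, hU₁⟩ :=
    MeasureTheory.tendstoUniformlyOn_of_ae_tendsto
      (f := fun k v => f (Real.exp v * T k) / f (T k)) (g := fun _ => (1 : ℝ))
      (μ := MeasureTheory.volume) (s := D)
      (fun k => ((hf.comp ((Real.measurable_exp).mul_const (T k))).div_const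
        (f (T k))).stronglyMeasurable)
      measurable_const.stronglyMeasurable hDmeas hDfin
      (MeasureTheory.ae_of_all _ fun v _ =>
        (hsv (Real.exp v) (Real.exp_pos v)).comp hTtop)
      (show (0 : ℝ) < I / 2 by linarith)
  -- Egorov for the second family
  obtain ⟨t₂, ht₂D, ht₂m, ht₂μ, hU₂⟩ :=
    MeasureTheory.tendstoUniformlyOn_of_ae_tendsto
      (f := fun k v => f (Real.exp v * (A k * T k)) / f (A k * T k))
      (g := fun _ => (1 : ℝ))
      (μ := MeasureTheory.volume) (s := D)
      (fun k => ((hf.comp ((Real.measurable_exp).mul_const (A k * T k))).div_const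
        (f (A k * T k))).stronglyMeasurable)
      measurable_const.stronglyMeasurable hDmeas hDfin
      (MeasureTheory.ae_of_all _ fun v _ =>
        (hsv (Real.exp v) (Real.exp_pos v)).comp hATtop)
      (show (0 : ℝ) < I / 2 by linarith)
  set E : Set ℝ := D \ t₁ with hEdef
  set E' : Set ℝ := D \ t₂ with hE'def
  have hEmeas : MeasurableSet E := hDmeas.diff ht₁m
  have hE'meas : MeasurableSet E' := hDmeas.diff ht₂m
  set δ : ℝ := min (ε / 4) (1 / 2) with hδdef
  have hδpos : 0 < δ := lt_min (by linarith) (by norm_num)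
  have hδhalf : δ ≤ 1 / 2 := min_le_right _ _
  have hδε : δ ≤ ε / 4 := min_le_left _ _
  have h1 := (Metric.tendstoUniformlyOn_iff.mp hU₁) δ hδpos
  have h2 := (Metric.tendstoUniformlyOn_iff.mp hU₂) δ hδpos
  obtain ⟨k, hk1, hk2⟩ := (h1.and h2).exists
  -- measure argument producing a common good point
  set u := Real.log (A k) with hudef
  have huℓ : ℓ ≤ u := Real.log_le_log hlam0 (hA k).1
  have huM : u ≤ M := Real.log_le_log (hApos k) (hA k).2
  set Fk : Set ℝ := (fun w => w - u) ⁻¹' E' with hFkdef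
  have hFkmeas : MeasurableSet Fk :=
    (measurable_id.sub_const u) hE'meas
  have hFkvol : MeasureTheory.volume Fk = MeasureTheory.volume E' := by
    have : Fk = (fun w => w + (-u)) ⁻¹' E' := by
      ext w; simp [hFkdef, sub_eq_add_neg]
    rw [this, MeasureTheory.measure_preimage_add_right]
  have hS : (E ∩ Fk).Nonempty := by
    apply MeasureTheory.nonempty_of_measure_ne_zero (μ := MeasureTheory.volume)
    intro h0
    have hDE : MeasureTheory.volume D ≤ MeasureTheory.volume E + MeasureTheory.volume t₁ :=
      (MeasureTheory.measure_mono (Set.subset_diff_union D t₁)).trans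
        (MeasureTheory.measure_union_le _ _)
    have hDE' : MeasureTheory.volume D ≤ MeasureTheory.volume E' + MeasureTheory.volume t₂ :=
      (MeasureTheory.measure_mono (Set.subset_diff_union D t₂)).trans
        (MeasureTheory.measure_union_le _ _)
    have hJ : MeasureTheory.volume (E ∪ Fk) ≤ ENNReal.ofReal (4 * I) := by
      have hsub : E ∪ Fk ⊆ Set.Icc ℓ (ℓ + 4 * I) := by
        rintro w (hw | hw)
        · obtain ⟨⟨hw1, hw2⟩, -⟩ := hw
          constructor <;> simp only [hIdef] at * <;> [linarith; linarith]
        · obtain ⟨⟨hw1, hw2⟩, -⟩ := hw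
          constructor <;> simp only [hIdef] at * <;> [linarith; linarith]
      calc MeasureTheory.volume (E ∪ Fk)
          ≤ MeasureTheory.volume (Set.Icc ℓ (ℓ + 4 * I)) := MeasureTheory.measure_mono hsub
        _ = ENNReal.ofReal (4 * I) := by rw [Real.volume_Icc]; ring_nf
    have hinter : MeasureTheory.volume E + MeasureTheory.volume Fk =
        MeasureTheory.volume (E ∪ Fk) + MeasureTheory.volume (E ∩ Fk) :=
      (MeasureTheory.measure_union_add_inter E hFkmeas).symm
    have hfin : ENNReal.ofReal (3 * I) + ENNReal.ofReal (3 * I) ≤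
        ENNReal.ofReal (4 * I) + (ENNReal.ofReal (I / 2) + ENNReal.ofReal (I / 2)) := by
      calc ENNReal.ofReal (3 * I) + ENNReal.ofReal (3 * I)
          = MeasureTheory.volume D + MeasureTheory.volume D := by rw [hDvol]
        _ ≤ (MeasureTheory.volume E + MeasureTheory.volume t₁) +
            (MeasureTheory.volume E' + MeasureTheory.volume t₂) := add_le_add hDE hDE'
        _ = (MeasureTheory.volume E + MeasureTheory.volume Fk) +
            (MeasureTheory.volume t₁ + MeasureTheory.volume t₂) := by rw [hFkvol]; ring
        _ = (MeasureTheory.volume (E ∪ Fk) + MeasureTheory.volume (E ∩ Fk)) +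
            (MeasureTheory.volume t₁ + MeasureTheory.volume t₂) := by rw [hinter]
        _ ≤ (ENNReal.ofReal (4 * I) + 0) +
            (ENNReal.ofReal (I / 2) + ENNReal.ofReal (I / 2)) := by
            exact add_le_add (add_le_add hJ h0.le) (add_le_add ht₁μ ht₂μ)
        _ = ENNReal.ofReal (4 * I) + (ENNReal.ofReal (I / 2) + ENNReal.ofReal (I / 2)) := by
            rw [add_zero]
    rw [← ENNReal.ofReal_add (by positivity) (by positivity),
      ← ENNReal.ofReal_add (by positivity) (by positivity),
      ← ENNReal.ofReal_add (by positivity) (by positivity),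
      ENNReal.ofReal_le_ofReal_iff (by positivity)] at hfin
    linarith
  obtain ⟨v, hvE, hvF⟩ := hS
  have hvF' : v - u ∈ D \ t₂ := hvF
  -- the contradiction
  have hexp : Real.exp (v - u) * (A k * T k) = Real.exp v * T k := by
    rw [Real.exp_sub, hudef, Real.exp_log (hApos k)]
    field_simp [(hApos k).ne']
  have hx := hk1 v hvE
  have hy := hk2 (v - u) hvF'
  rw [Real.dist_eq, abs_sub_comm] at hx hy
  rw [hexp] at hy
  set P := f (Real.exp v * T k) with hPdef
  set B := f (T k) with hBdef
  set Q := f (A k * T k) with hQdef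
  have hPpos : 0 < P := hpos _ (mul_pos (Real.exp_pos v) (hTpos k))
  have hBpos : 0 < B := hpos _ (hTpos k)
  have hQpos : 0 < Q := hpos _ (mul_pos (hApos k) (hTpos k))
  -- hx : |P / B - 1| < δ ; hy : |P / Q - 1| < δ
  set x := P / B with hxdef
  set y := P / Q with hydef
  have hy2 : 1 / 2 < y := by
    have := abs_lt.mp hy
    linarith
  have hxy : |x - y| < 2 * δ := by
    have hx' := abs_lt.mp hx
    have hy' := abs_lt.mp hy
    rw [abs_lt]
    constructor <;> linarith
  have hQB : Q / B = x / y := by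
    rw [hxdef, hydef]
    field_simp
  have hlt : |Q / B - 1| < ε := by
    rw [hQB]
    have hypos : (0 : ℝ) < y := by linarith
    have heq : x / y - 1 = (x - y) / y := by field_simp
    rw [heq, abs_div, abs_of_pos hypos, div_lt_iff₀ hypos]
    nlinarith
  exact absurd (hbad k) (not_le.mpr hlt)
end

section
/- Consider first passage percolation on ℤ^d (d ≥ 2) with i.i.d. nonnegative edge weights τ_e satisfying P(τ_e = 0) < p_c(d) and c₁ exp(−α t^r) ≤ P(τ_e > t) ≤ c₂ exp(−α t^r) for large t (c₁, c₂, α > 0, 0 < r ≤ 1). Let μ = μ(e₁) be the time constant. Then for any ξ > 0, liminf_{n→∞} n^{−r} log P(T(0, n e₁) > (μ + ξ) n) ≥ −2dα ξ^r. -/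
open MeasureTheory ProbabilityTheory Filter

/-- Vertices of the lattice `ℤ^d`. -/
abbrev Vert (d : ℕ) := Fin d → ℤ

/-- Nearest-neighbor adjacency on `ℤ^d`. -/
def adj {d : ℕ} (x y : Vert d) : Prop := ∑ i, (x i - y i).natAbs = 1

lemma adj_symm {d : ℕ} : Symmetric (@adj d) := by
  intro x y h
  unfold adj at *
  rw [Finset.sum_congr rfl fun i _ => ?_]
  · exact h
  · omega

/-- The set of nearest-neighbor edges of `ℤ^d`, as unordered pairs. -/
def EdgeSet (d : ℕ) : Set (Sym2 (Vert d)) := Sym2.fromRel (⟨fun _ _ h => @adj_symm d _ _ h⟩ : Std.Symm (@adj d))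

/-- The passage time of a path (a list of vertices), given edge weights `τ`. -/
def pathTime {d : ℕ} (τ : Sym2 (Vert d) → ℝ) (γ : List (Vert d)) : ℝ :=
  ((γ.zip γ.tail).map fun p => τ s(p.1, p.2)).sum

/-- `IsPathFrom γ x y` means `γ` is a nearest-neighbor lattice path from `x` to `y`. -/
def IsPathFrom {d : ℕ} (γ : List (Vert d)) (x y : Vert d) : Prop :=
  γ.Chain' adj ∧ γ.head? = some x ∧ γ.getLast? = some y

/-- The first passage time between `x` and `y`. -/
noncomputable def fpt {d : ℕ} (τ : Sym2 (Vert d) → ℝ) (x y : Vert d) : ℝ :=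
  sInf {t | ∃ γ : List (Vert d), IsPathFrom γ x y ∧ pathTime τ γ = t}

/-- The first passage time restricted to paths staying in the vertex set `D`. -/
noncomputable def fptRes {d : ℕ} (D : Set (Vert d)) (τ : Sym2 (Vert d) → ℝ)
    (x y : Vert d) : ℝ :=
  sInf {t | ∃ γ : List (Vert d), IsPathFrom γ x y ∧ (∀ v ∈ γ, v ∈ D) ∧ pathTime τ γ = t}

/-- The first passage time restricted to paths using only edges in `E`. -/
noncomputable def fptResE {d : ℕ} (E : Set (Sym2 (Vert d))) (τ : Sym2 (Vert d) → ℝ)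
    (x y : Vert d) : ℝ :=
  sInf {t | ∃ γ : List (Vert d), IsPathFrom γ x y ∧
    (∀ p ∈ γ.zip γ.tail, s(p.1, p.2) ∈ E) ∧ pathTime τ γ = t}

/-- A configuration of open/closed edges percolates if the open cluster of the
origin is infinite. -/
def Percolates {d : ℕ} (cfg : Sym2 (Vert d) → Bool) : Prop :=
  {v : Vert d | ∃ γ : List (Vert d),
    γ.Chain' (fun x y => adj x y ∧ cfg s(x, y) = true) ∧
    γ.head? = some 0 ∧ γ.getLast? = some v}.Infinite

/-- The critical probability `p_c(d)` of Bernoulli bond percolation on `ℤ^d`: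
the supremum of those `p ∈ [0,1]` such that any i.i.d. Bernoulli(`p`) family of
open/closed edges a.s. does not percolate. -/
noncomputable def pc (d : ℕ) : ℝ :=
  sSup {p : ℝ | 0 ≤ p ∧ p ≤ 1 ∧
    ∀ (Ω : Type) (_ : MeasurableSpace Ω) (P : Measure Ω), IsProbabilityMeasure P →
      ∀ η : Sym2 (Vert d) → Ω → Bool, (∀ e, Measurable (η e)) →
        iIndepFun (fun e : EdgeSet d => η e.1) P →
        (∀ e ∈ EdgeSet d, P {ω | η e ω = true} = ENNReal.ofReal p) →
        P {ω | Percolates fun e => η e ω} = 0}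

/-- The first coordinate unit vector in `ℤ^d`. -/
def unitVec (d : ℕ) : Vert d := fun i => if (i : ℕ) = 0 then 1 else 0

/-- The lattice point `n e₁`. -/
def axisPt (d : ℕ) (n : ℕ) : Vert d := fun i => if (i : ℕ) = 0 then (n : ℤ) else 0

/-! ### Auxiliary lemmas -/

section Aux

variable {d : ℕ}

lemma pathTime_nonneg (τ : Sym2 (Vert d) → ℝ) (h : ∀ e, 0 ≤ τ e) (γ : List (Vert d)) :
    0 ≤ pathTime τ γ := by
  apply List.sum_nonneg
  intro x hx
  simp only [List.mem_map] at hx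
  obtain ⟨p, -, rfl⟩ := hx
  exact h _

lemma pathTime_cons_cons (τ : Sym2 (Vert d) → ℝ) (x y : Vert d) (l : List (Vert d)) :
    pathTime τ (x :: y :: l) = τ s(x, y) + pathTime τ (y :: l) := by
  simp [pathTime]

lemma le_pathTime_cons (τ : Sym2 (Vert d) → ℝ) (h : ∀ e, 0 ≤ τ e) (x : Vert d)
    (l : List (Vert d)) : pathTime τ l ≤ pathTime τ (x :: l) := by
  cases l with
  | nil => simp [pathTime]
  | cons y l => rw [pathTime_cons_cons]; linarith [h s(x, y)]

lemma pathTime_suffix_le (τ : Sym2 (Vert d) → ℝ) (h : ∀ e, 0 ≤ τ e)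
    (σ δ : List (Vert d)) : pathTime τ δ ≤ pathTime τ (σ ++ δ) := by
  induction σ with
  | nil => simp
  | cons x σ ih => exact ih.trans ((le_pathTime_cons τ h x (σ ++ δ)).trans_eq (by simp))

lemma axisPt_zero : axisPt d 0 = 0 := by
  funext i; simp [axisPt]

lemma adj_axisPt (hd : 1 ≤ d) (k : ℕ) : adj (axisPt d k) (axisPt d (k + 1)) := by
  unfold adj axisPt
  have h0 : (⟨0, hd⟩ : Fin d) ∈ Finset.univ := Finset.mem_univ _
  rw [Finset.sum_eq_single (⟨0, hd⟩ : Fin d)]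
  · simp
  · intro j _ hj
    have : (j : ℕ) ≠ 0 := by
      intro h; apply hj; exact Fin.ext h
    simp [this]
  · intro h; exact absurd h0 h

/-- The straight path from the origin to `axisPt d n`. -/
def straight (d n : ℕ) : List (Vert d) := (List.range (n + 1)).map (axisPt d)

lemma straight_isPathFrom (hd : 1 ≤ d) (n : ℕ) :
    IsPathFrom (straight d n) 0 (axisPt d n) := by
  refine ⟨?_, ?_, ?_⟩
  · rw [straight, List.Chain', List.isChain_map]
    rw [List.isChain_range_succ]
    intro m _
    exact adj_axisPt hd m
  · rw [straight, List.range_succ_eq_map]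
    simp [axisPt_zero]
  · rw [straight, List.range_succ, List.map_append]
    simp

lemma fptSet_bddBelow (τ : Sym2 (Vert d) → ℝ) (h : ∀ e, 0 ≤ τ e) (x y : Vert d) :
    BddBelow {t | ∃ γ : List (Vert d), IsPathFrom γ x y ∧ pathTime τ γ = t} := by
  refine ⟨0, ?_⟩
  rintro t ⟨γ, -, rfl⟩
  exact pathTime_nonneg τ h γ

lemma fptSet_nonempty (hd : 1 ≤ d) (τ : Sym2 (Vert d) → ℝ) (n : ℕ) :
    {t | ∃ γ : List (Vert d), IsPathFrom γ 0 (axisPt d n) ∧ pathTime τ γ = t}.Nonempty :=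
  ⟨_, straight d n, straight_isPathFrom hd n, rfl⟩

lemma adj_ne {x z : Vert d} (h : adj x z) : z ≠ x := by
  intro h'
  subst h'
  unfold adj at h
  simp at h

/-- The neighbor of the origin indexed by a coordinate and a sign. -/
def nbrPt (d : ℕ) (p : Fin d × Bool) : Vert d :=
  fun j => if j = p.1 then (if p.2 then 1 else -1) else 0

lemma adj_zero_nbrPt (p : Fin d × Bool) : adj 0 (nbrPt d p) := by
  unfold adj nbrPt
  rw [Finset.sum_eq_single p.1]
  · cases p.2 <;> simp
  · intro j _ hj; simp [hj]
  · intro h; exact absurd (Finset.mem_univ _) h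

lemma adj_zero_iff_nbrPt {z : Vert d} (h : adj 0 z) : ∃ p : Fin d × Bool, z = nbrPt d p := by
  unfold adj at h
  have h' : ∑ i, (z i).natAbs = 1 := by
    rw [← h]; apply Finset.sum_congr rfl; intro i _
    have : ((0 : Vert d) i - z i) = -(z i) := by simp
    rw [this, Int.natAbs_neg]
  have hne : ∃ i, (z i).natAbs ≠ 0 := by
    by_contra hc
    push_neg at hc
    rw [Finset.sum_eq_zero (fun i _ => hc i)] at h'
    exact one_ne_zero h'.symm
  obtain ⟨i, hi⟩ := hne
  have hsplit : (z i).natAbs + ∑ j ∈ Finset.univ.erase i, (z j).natAbs = 1 := by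
    rw [Finset.add_sum_erase _ (fun j => (z j).natAbs) (Finset.mem_univ i)]; exact h'
  have hzi : (z i).natAbs = 1 := by omega
  have hrest : ∀ j, j ≠ i → z j = 0 := by
    intro j hj
    have h0 : ∑ j ∈ Finset.univ.erase i, (z j).natAbs = 0 := by omega
    have := (Finset.sum_eq_zero_iff).1 h0 j (by simp [hj])
    omega
  refine ⟨(i, decide (z i = 1)), ?_⟩
  funext j
  unfold nbrPt
  by_cases hij : j = i
  · subst hij
    simp only [if_pos rfl]
    rcases Int.natAbs_eq_iff.1 hzi with h1 | h1 <;> simp [h1]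
  · simp [hij, hrest j hij]

/-- Last-occurrence decomposition of a list. -/
lemma exists_last_occ {α : Type*} [DecidableEq α] {a : α} {l : List α} (h : a ∈ l) :
    ∃ s t : List α, l = s ++ a :: t ∧ a ∉ t := by
  induction l with
  | nil => simp at h
  | cons b l ih =>
    by_cases hb : a ∈ l
    · obtain ⟨s, t, rfl, hat⟩ := ih hb
      exact ⟨b :: s, t, rfl, hat⟩
    · have hab : a = b := by
        rcases List.mem_cons.1 h with h | h
        · exact h
        · exact absurd h hb
      exact ⟨[], l, by rw [hab]; rfl, hb⟩

/-- Key deterministic lemma: if every edge at the origin costs at least `a ≥ 0`, and every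
nearest-neighbor path from a neighbor of the origin to `axisPt d n` avoiding the origin costs
at least `b`, then every path from `0` to `axisPt d n` costs at least `a + b`. -/
lemma key_path_bound (hd : 1 ≤ d) {n : ℕ} (hn : 1 ≤ n) (τ : Sym2 (Vert d) → ℝ)
    (hnn : ∀ e, 0 ≤ τ e) {a b : ℝ} (ha : 0 ≤ a)
    (hA : ∀ z : Vert d, adj 0 z → a ≤ τ s(0, z))
    (hB : ∀ γ : List (Vert d), γ.Chain' adj → (∀ v ∈ γ, v ≠ (0 : Vert d)) →
      (∃ z, γ.head? = some z ∧ adj 0 z) → γ.getLast? = some (axisPt d n) →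
      b ≤ pathTime τ γ) :
    ∀ γ : List (Vert d), IsPathFrom γ 0 (axisPt d n) → a + b ≤ pathTime τ γ := by
  have main : ∀ N : ℕ, ∀ γ : List (Vert d), γ.length ≤ N →
      IsPathFrom γ 0 (axisPt d n) → a + b ≤ pathTime τ γ := by
    intro N
    induction N with
    | zero =>
      intro γ hlen ⟨_, hhead, _⟩
      interval_cases h : γ.length
      rw [List.length_eq_zero_iff] at h
      subst h
      simp at hhead
    | succ N ih =>
      intro γ hlen ⟨hchain, hhead, hlast⟩
      match γ with
      | [] => simp at hhead
      | [x] =>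
        exfalso
        simp only [List.head?_cons, Option.some_inj] at hhead
        subst hhead
        simp only [List.getLast?_singleton, Option.some_inj] at hlast
        have := congrFun hlast (⟨0, hd⟩ : Fin d)
        simp [axisPt] at this
        omega
      | x :: z :: rest =>
        simp only [List.head?_cons, Option.some_inj] at hhead
        subst hhead
        rw [List.Chain', List.isChain_cons_cons] at hchain
        obtain ⟨hadj, hchain'⟩ := hchain
        rw [pathTime_cons_cons]
        have hlast' : (z :: rest).getLast? = some (axisPt d n) := by
          rwa [List.getLast?_cons_cons] at hlast
        have hτa : a ≤ τ s(0, z) := hA z hadj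
        by_cases h0 : (0 : Vert d) ∈ z :: rest
        · obtain ⟨σ, ρ, hsplit, h0ρ⟩ := exists_last_occ h0
          have hsuffix : ((0 : Vert d) :: ρ) <:+ (z :: rest) := ⟨σ, hsplit.symm⟩
          have hlenρ : ((0 : Vert d) :: ρ).length ≤ N := by
            have := hsuffix.length_le
            simp only [List.length_cons] at *
            omega
          have hpath : IsPathFrom ((0 : Vert d) :: ρ) 0 (axisPt d n) := by
            refine ⟨hchain'.suffix hsuffix, by simp, ?_⟩
            rw [hsplit, List.getLast?_append_of_ne_nil] at hlast'
            · exact hlast'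
            · simp
          have hsub : pathTime τ ((0 : Vert d) :: ρ) ≤ pathTime τ (z :: rest) := by
            rw [hsplit]
            exact pathTime_suffix_le τ hnn σ _
          have := ih _ hlenρ hpath
          linarith
        · have hb' : b ≤ pathTime τ (z :: rest) := by
            refine hB _ hchain' ?_ ⟨z, by simp, hadj⟩ hlast'
            intro v hv hv0
            exact h0 (hv0 ▸ hv)
          linarith
  intro γ hγ
  exact main γ.length γ le_rfl hγ

lemma mem_zip_adj {γ : List (Vert d)} (h : γ.Chain' adj) {p : Vert d × Vert d}
    (hp : p ∈ γ.zip γ.tail) : adj p.1 p.2 := by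
  induction γ with
  | nil => simp at hp
  | cons x l ih =>
    match l with
    | [] => simp at hp
    | y :: l' =>
      rw [List.Chain', List.isChain_cons_cons] at h
      simp only [List.tail_cons, List.zip_cons_cons, List.mem_cons] at hp
      rcases hp with hp | hp
      · subst hp; exact h.1
      · exact ih h.2 hp

lemma mem_of_mem_zip_left {γ : List (Vert d)} {p : Vert d × Vert d}
    (hp : p ∈ γ.zip γ.tail) : p.1 ∈ γ :=
  (List.of_mem_zip (show (p.1, p.2) ∈ γ.zip γ.tail by rw [Prod.mk.eta]; exact hp)).1

lemma mem_of_mem_zip_right {γ : List (Vert d)} {p : Vert d × Vert d}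
    (hp : p ∈ γ.zip γ.tail) : p.2 ∈ γ :=
  List.mem_of_mem_tail
    (List.of_mem_zip (show (p.1, p.2) ∈ γ.zip γ.tail by rw [Prod.mk.eta]; exact hp)).2

lemma measurable_pathTime {Ω : Type*} (m' : MeasurableSpace Ω) (τ : Ω → Sym2 (Vert d) → ℝ)
    (γ : List (Vert d))
    (h : ∀ p ∈ γ.zip γ.tail, Measurable[m'] fun ω => τ ω s(p.1, p.2)) :
    Measurable[m'] fun ω => pathTime (τ ω) γ := by
  unfold pathTime
  revert h
  generalize γ.zip γ.tail = l
  intro h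
  induction l with
  | nil => simpa using @measurable_const ℝ Ω _ m' 0
  | cons p l ih =>
    simp only [List.map_cons, List.sum_cons]
    exact (h p (by simp)).add (ih fun q hq => h q (by simp [hq]))

lemma measurable_fpt {Ω : Type*} [MeasurableSpace Ω] (τ : Ω → Sym2 (Vert d) → ℝ)
    (hmeas : ∀ e, Measurable fun ω => τ ω e) (n : ℕ) :
    Measurable fun ω => fpt (τ ω) 0 (axisPt d n) := by
  have hset : ∀ ω : Ω, {t | ∃ γ : List (Vert d), IsPathFrom γ 0 (axisPt d n) ∧
      pathTime (τ ω) γ = t} = Set.range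
        (fun γ : {γ : List (Vert d) // IsPathFrom γ 0 (axisPt d n)} =>
          pathTime (τ ω) γ.1) := by
    intro ω
    ext t
    simp only [Set.mem_setOf_eq, Set.mem_range, Subtype.exists]
    constructor
    · rintro ⟨γ, hγ, rfl⟩; exact ⟨γ, hγ, rfl⟩
    · rintro ⟨γ, hγ, rfl⟩; exact ⟨γ, hγ, rfl⟩
  unfold fpt
  simp_rw [hset]
  exact Measurable.iInf fun γ => measurable_pathTime _ τ γ.1 fun p _ => hmeas _

lemma measure_fpt_lt_tendsto_zero {Ω : Type*} [MeasurableSpace Ω] (μ : Measure Ω)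
    [IsProbabilityMeasure μ] (τ : Ω → Sym2 (Vert d) → ℝ)
    (hmeas : ∀ e, Measurable fun ω => τ ω e) (tc c : ℝ) (hc : c < tc)
    (htc : ∀ᵐ ω ∂μ, Tendsto (fun n : ℕ => fpt (τ ω) 0 (axisPt d n) / n) atTop (nhds tc)) :
    Tendsto (fun n : ℕ => μ {ω | fpt (τ ω) 0 (axisPt d n) < c * n}) atTop (nhds 0) := by
  set C : ℕ → Set Ω := fun n => {ω | fpt (τ ω) 0 (axisPt d n) < c * n} with hC
  have hCmeas : ∀ n, MeasurableSet (C n) := by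
    intro n
    exact measurableSet_lt (measurable_fpt τ hmeas n) measurable_const
  set D : ℕ → Set Ω := fun k => ⋃ (n : ℕ) (_ : k ≤ n), C n with hD
  have hDmeas : ∀ k, MeasurableSet (D k) := fun k =>
    MeasurableSet.iUnion fun n => MeasurableSet.iUnion fun _ => hCmeas n
  have hDanti : Antitone D := by
    intro k k' hkk'
    exact Set.iUnion₂_subset fun n hn =>
      Set.subset_iUnion₂ (s := fun n (_ : k ≤ n) => C n) n (hkk'.trans hn)
  have hInter : μ (⋂ k, D k) = 0 := by
    refine measure_mono_null ?_ htc
    intro ω hω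
    simp only [Set.mem_iInter, hD, Set.mem_iUnion, Set.mem_setOf_eq] at hω
    simp only [Set.mem_setOf_eq]
    intro htend
    set c' : ℝ := (c + tc) / 2 with hc'
    have hcc' : c < c' := by rw [hc']; linarith
    have hc'tc : c' < tc := by rw [hc']; linarith
    have hev : ∀ᶠ n : ℕ in atTop, c' < fpt (τ ω) 0 (axisPt d n) / n :=
      htend.eventually (eventually_gt_nhds hc'tc)
    obtain ⟨k₀, hk₀⟩ := hev.exists_forall_of_atTop
    obtain ⟨n, hn, hCn⟩ := hω (max k₀ 1)
    have hn1 : 1 ≤ n := le_trans (le_max_right _ _) hn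
    have hnpos : (0 : ℝ) < n := by exact_mod_cast hn1
    have h1 := hk₀ n (le_trans (le_max_left _ _) hn)
    rw [lt_div_iff₀ hnpos] at h1
    have : c * n < c' * n := by
      apply mul_lt_mul_of_pos_right hcc' hnpos
    simp only [C, Set.mem_setOf_eq] at hCn
    linarith
  have htendD : Tendsto (fun k => μ (D k)) atTop (nhds 0) := by
    have := tendsto_measure_iInter_atTop (μ := μ)
      (fun k => (hDmeas k).nullMeasurableSet) hDanti ⟨0, measure_ne_top μ _⟩
    rwa [hInter] at this
  refine tendsto_of_tendsto_of_tendsto_of_le_of_le tendsto_const_nhds htendD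
    (fun n => by simp) (fun n => measure_mono ?_)
  intro ω hω
  exact Set.mem_iUnion₂.2 ⟨n, le_rfl, hω⟩

end Aux

set_option maxHeartbeats 2000000 in
theorem fpp_upper_tail_ldp_lower_bound
    {d : ℕ} (hd : 2 ≤ d) {Ω : Type*} [MeasurableSpace Ω]
    (μ : Measure Ω) [IsProbabilityMeasure μ] (τ : Ω → Sym2 (Vert d) → ℝ)
    (hmeas : ∀ e, Measurable fun ω => τ ω e) (hnonneg : ∀ ω e, 0 ≤ τ ω e)
    (hindep : iIndepFun (fun e : EdgeSet d => fun ω => τ ω e.1) μ)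
    (hident : ∀ e e' : EdgeSet d,
      Measure.map (fun ω => τ ω e.1) μ = Measure.map (fun ω => τ ω e'.1) μ)
    (c₁ c₂ α r : ℝ) (hc₁ : 0 < c₁) (hc₂ : 0 < c₂) (hα : 0 < α) (hr0 : 0 < r) (hr1 : r ≤ 1)
    (h0 : μ {ω | τ ω s(0, unitVec d) = 0} < ENNReal.ofReal (pc d))
    (htail : ∀ᶠ t in atTop,
      c₁ * Real.exp (-α * t ^ r) ≤ (μ {ω | t < τ ω s(0, unitVec d)}).toReal ∧
      (μ {ω | t < τ ω s(0, unitVec d)}).toReal ≤ c₂ * Real.exp (-α * t ^ r))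
    (tc : ℝ)
    (htc : ∀ᵐ ω ∂μ,
      Tendsto (fun n : ℕ => fpt (τ ω) 0 (axisPt d n) / n) atTop (nhds tc))
    (ξ : ℝ) (hξ : 0 < ξ) :
    -(2 * d * α * ξ ^ r) ≤
      liminf (fun n : ℕ =>
        Real.log (μ {ω | (tc + ξ) * n < fpt (τ ω) 0 (axisPt d n)}).toReal / (n : ℝ) ^ r)
        atTop := by
  classical
  have hd1 : 1 ≤ d := le_trans one_le_two hd
  -- the distinguished edge at the origin
  have hu_adj : adj 0 (unitVec d) := by
    have huv : unitVec d = nbrPt d (⟨0, hd1⟩, true) := by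
      funext j
      simp only [unitVec, nbrPt]
      by_cases hj : j = (⟨0, hd1⟩ : Fin d)
      · subst hj; simp
      · have hj' : (j : ℕ) ≠ 0 := fun h => hj (Fin.ext h)
        simp [hj, hj']
    rw [huv]; exact adj_zero_nbrPt _
  have hu_mem : s(0, unitVec d) ∈ EdgeSet d := Sym2.fromRel_prop.2 hu_adj
  set ue : EdgeSet d := ⟨s(0, unitVec d), hu_mem⟩ with hue
  -- identical marginals on upper level sets
  have hval : ∀ (e : EdgeSet d) (x : ℝ),
      μ {ω | x ≤ τ ω e.1} = μ {ω | x ≤ τ ω s(0, unitVec d)} := by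
    intro e x
    have h1 : {ω | x ≤ τ ω e.1} = (fun ω => τ ω e.1) ⁻¹' (Set.Ici x) := rfl
    have h2 : {ω | x ≤ τ ω s(0, unitVec d)} = (fun ω => τ ω ue.1) ⁻¹' (Set.Ici x) := rfl
    rw [h1, h2, ← Measure.map_apply (hmeas _) measurableSet_Ici,
      ← Measure.map_apply (hmeas _) measurableSet_Ici, hident e ue]
  -- the finset of edges at the origin
  set ES : Finset (EdgeSet d) := Finset.image
    (fun p : Fin d × Bool =>
      (⟨s(0, nbrPt d p), Sym2.fromRel_prop.2 (adj_zero_nbrPt p)⟩ : EdgeSet d))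
    Finset.univ with hES
  have hES_card : ES.card ≤ 2 * d := by
    refine Finset.card_image_le.trans ?_
    rw [Finset.card_univ, Fintype.card_prod, Fintype.card_fin, Fintype.card_bool]
    omega
  have hES_cover : ∀ z : Vert d, adj 0 z → ∃ e ∈ ES, (e : EdgeSet d).1 = s(0, z) := by
    intro z hz
    obtain ⟨p, rfl⟩ := adj_zero_iff_nbrPt hz
    exact ⟨_, Finset.mem_image_of_mem _ (Finset.mem_univ p), rfl⟩
  have hES_zero : ∀ e ∈ ES, (0 : Vert d) ∈ (e : EdgeSet d).1 := by
    intro e he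
    rw [hES, Finset.mem_image] at he
    obtain ⟨p, -, rfl⟩ := he
    rw [Sym2.mem_iff]; left; rfl
  -- σ-algebras
  set me : EdgeSet d → MeasurableSpace Ω :=
    fun e => MeasurableSpace.comap (fun ω => τ ω e.1) inferInstance with hme
  have hme_le : ∀ e, me e ≤ ‹MeasurableSpace Ω› := fun e => (hmeas e.1).comap_le
  set Sidx : Set (EdgeSet d) := {e : EdgeSet d | (0 : Vert d) ∈ e.1} with hSidx
  have hindep2 : Indep (⨆ e ∈ Sidx, me e) (⨆ e ∈ Sidxᶜ, me e) μ :=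
    indep_biSup_compl hme_le hindep.iIndep Sidx
  have hMT_le : (⨆ e ∈ Sidxᶜ, me e) ≤ ‹MeasurableSpace Ω› := iSup₂_le fun e _ => hme_le e
  -- tail bounds from some threshold on
  obtain ⟨t₀, ht₀⟩ := eventually_atTop.1 htail
  -- reduce to an ε-room version
  refine le_of_forall_sub_le fun δ hδ => ?_
  -- choose ε > 0 with 2dα(ξ+2ε)^r < 2dαξ^r + δ/2
  obtain ⟨ε, hεlt, hεpos⟩ : ∃ ε : ℝ, (2*(d:ℝ)*α*(ξ+2*ε)^r < 2*d*α*ξ^r + δ/2) ∧ 0 < ε := by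
    have hrpow_cont : ContinuousAt (fun x : ℝ => 2*(d:ℝ)*α*x^r) ξ :=
      continuousAt_const.mul (Real.continuousAt_rpow_const ξ r (Or.inl hξ.ne'))
    have h1 : Tendsto (fun e : ℝ => ξ + 2*e) (nhds 0) (nhds ξ) := by
      have h2 : Continuous fun e : ℝ => ξ + 2*e := by continuity
      have := h2.tendsto 0
      simpa using this
    have hcomp : Tendsto (fun e : ℝ => 2*(d:ℝ)*α*(ξ+2*e)^r) (nhds 0) (nhds (2*d*α*ξ^r)) :=
      hrpow_cont.tendsto.comp h1
    have hev : ∀ᶠ e : ℝ in nhds 0, 2*(d:ℝ)*α*(ξ+2*e)^r < 2*d*α*ξ^r + δ/2 :=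
      hcomp.eventually_lt_const (by linarith)
    obtain ⟨ε, h1', h2'⟩ :=
      ((hev.filter_mono nhdsWithin_le_nhds).and
        (eventually_mem_nhdsWithin (s := Set.Ioi (0:ℝ)) (a := 0))).exists
    exact ⟨ε, h1', h2'⟩
  set θ : ℝ := ξ + 2*ε with hθdef
  have hθpos : 0 < θ := by rw [hθdef]; linarith
  -- the events
  set Aset : ℕ → Set Ω := fun n => ⋂ e ∈ ES, {ω | θ * n ≤ τ ω (e : EdgeSet d).1} with hAset
  set RCond : ℕ → List (Vert d) → Prop := fun n γ =>
    γ.Chain' adj ∧ (∀ v ∈ γ, v ≠ (0 : Vert d)) ∧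
      (∃ z, γ.head? = some z ∧ adj 0 z) ∧ γ.getLast? = some (axisPt d n) with hRCond
  set Bset : ℕ → Set Ω := fun n =>
    ⋂ γ : List (Vert d), {ω | RCond n γ → (tc - ε) * n ≤ pathTime (τ ω) γ} with hBset
  -- measurability of A with respect to the edges at the origin
  have hA_measS : ∀ n : ℕ, MeasurableSet[⨆ e ∈ Sidx, me e] (Aset n) := by
    intro n
    refine MeasurableSet.iInter fun e => MeasurableSet.iInter fun he => ?_
    have h1 : MeasurableSet[me e] {ω | θ * n ≤ τ ω e.1} :=
      ⟨Set.Ici (θ * n), measurableSet_Ici, rfl⟩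
    have h2 : me e ≤ ⨆ e ∈ Sidx, me e :=
      le_iSup₂ (f := fun (e : EdgeSet d) (_ : e ∈ Sidx) => me e) e (hES_zero e he)
    exact h2 _ h1
  -- measurability of B with respect to the other edges
  have hB_measT : ∀ n : ℕ, MeasurableSet[⨆ e ∈ Sidxᶜ, me e] (Bset n) := by
    intro n
    refine MeasurableSet.iInter fun γ => ?_
    by_cases hR : RCond n γ
    · have hset : {ω | RCond n γ → (tc - ε) * n ≤ pathTime (τ ω) γ}
          = (fun ω => pathTime (τ ω) γ) ⁻¹' Set.Ici ((tc - ε) * n) := by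
        ext ω
        simp only [Set.mem_setOf_eq, Set.mem_preimage, Set.mem_Ici]
        exact ⟨fun h => h hR, fun h _ => h⟩
      rw [hset]
      refine (measurable_pathTime _ τ γ fun p hp => ?_) measurableSet_Ici
      have hadj : adj p.1 p.2 := mem_zip_adj hR.1 hp
      have hmem : s(p.1, p.2) ∈ EdgeSet d := Sym2.fromRel_prop.2 hadj
      have h0 : (⟨s(p.1, p.2), hmem⟩ : EdgeSet d) ∈ Sidxᶜ := by
        simp only [hSidx, Set.mem_compl_iff, Set.mem_setOf_eq, Sym2.mem_iff]
        push_neg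
        exact ⟨fun h => hR.2.1 p.1 (mem_of_mem_zip_left hp) h.symm,
          fun h => hR.2.1 p.2 (mem_of_mem_zip_right hp) h.symm⟩
      have hle : me ⟨s(p.1, p.2), hmem⟩ ≤ ⨆ e ∈ Sidxᶜ, me e :=
        le_iSup₂ (f := fun (e : EdgeSet d) (_ : e ∈ Sidxᶜ) => me e) _ h0
      have hm : Measurable[me ⟨s(p.1, p.2), hmem⟩] fun ω => τ ω s(p.1, p.2) :=
        measurable_iff_comap_le.2 le_rfl
      exact hm.mono hle le_rfl
    · have hset : {ω | RCond n γ → (tc - ε) * n ≤ pathTime (τ ω) γ} = Set.univ := by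
        ext ω; simp [hR]
      rw [hset]
      exact MeasurableSet.univ
  -- independence of A and B
  have hAB : ∀ n : ℕ, μ (Aset n ∩ Bset n) = μ (Aset n) * μ (Bset n) := fun n =>
    (Indep_iff _ _ _).1 hindep2 _ _ (hA_measS n) (hB_measT n)
  -- the inclusion A ∩ B ⊆ E
  have hincl : ∀ n : ℕ, 1 ≤ n → Aset n ∩ Bset n ⊆
      {ω | (tc + ξ) * n < fpt (τ ω) 0 (axisPt d n)} := by
    intro n hn ω hω
    obtain ⟨hAω, hBω⟩ := hω
    have hA' : ∀ z : Vert d, adj 0 z → θ * n ≤ τ ω s(0, z) := by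
      intro z hz
      obtain ⟨e, heES, hes⟩ := hES_cover z hz
      have := Set.mem_iInter₂.1 hAω e heES
      rwa [Set.mem_setOf_eq, hes] at this
    have hB' : ∀ γ : List (Vert d), γ.Chain' adj → (∀ v ∈ γ, v ≠ (0 : Vert d)) →
        (∃ z, γ.head? = some z ∧ adj 0 z) → γ.getLast? = some (axisPt d n) →
        (tc - ε) * n ≤ pathTime (τ ω) γ := by
      intro γ h1 h2 h3 h4
      exact Set.mem_iInter.1 hBω γ ⟨h1, h2, h3, h4⟩
    have hθn : (0:ℝ) ≤ θ * n := mul_nonneg hθpos.le (Nat.cast_nonneg n)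
    have hkey := key_path_bound hd1 hn (τ ω) (hnonneg ω) hθn hA' hB'
    have hfpt : θ * n + (tc - ε) * n ≤ fpt (τ ω) 0 (axisPt d n) := by
      refine le_csInf (fptSet_nonempty hd1 _ n) ?_
      rintro t ⟨γ, hγ, rfl⟩
      exact hkey γ hγ
    have hn1 : (1 : ℝ) ≤ n := by exact_mod_cast hn
    have hεn : (0:ℝ) < ε * n := mul_pos hεpos (by linarith)
    have hlt : (tc + ξ) * n < θ * n + (tc - ε) * n := by
      have hth : θ * (n:ℝ) + (tc - ε) * n = (tc + ξ) * n + ε * n := by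
        rw [hθdef]; ring
      linarith
    exact lt_of_lt_of_le hlt hfpt
  -- the measure of A
  have hAprod : ∀ n : ℕ,
      μ (Aset n) = μ {ω | θ * n ≤ τ ω s(0, unitVec d)} ^ ES.card := by
    intro n
    have hprod := hindep.meas_biInter (S := ES)
      (s := fun e => {ω | θ * n ≤ τ ω (e : EdgeSet d).1})
      (fun e _ => ⟨Set.Ici (θ * n), measurableSet_Ici, rfl⟩)
    calc μ (Aset n) = ∏ e ∈ ES, μ {ω | θ * n ≤ τ ω (e : EdgeSet d).1} := hprod
      _ = ∏ _e ∈ ES, μ {ω | θ * n ≤ τ ω s(0, unitVec d)} :=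
        Finset.prod_congr rfl fun e _ => hval e _
      _ = μ {ω | θ * n ≤ τ ω s(0, unitVec d)} ^ ES.card := Finset.prod_const _
  -- the event that the passage time is too small
  set Cset : ℕ → Set Ω := fun n =>
    {ω | fpt (τ ω) 0 (axisPt d n) < (tc - ε/2) * n} with hCset
  have hCtend : Tendsto (fun n : ℕ => μ (Cset n)) atTop (nhds 0) :=
    measure_fpt_lt_tendsto_zero μ τ hmeas tc (tc - ε/2) (by linarith) htc
  -- complement of B is contained in C together with a large edge at the origin
  have hBc_sub : ∀ n : ℕ, 1 ≤ n → (Bset n)ᶜ ⊆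
      Cset n ∪ ⋃ e ∈ ES, {ω | (ε/2) * n ≤ τ ω (e : EdgeSet d).1} := by
    intro n hn ω hω
    by_cases hU : ω ∈ ⋃ e ∈ ES, {ω | (ε/2) * n ≤ τ ω (e : EdgeSet d).1}
    · exact Or.inr hU
    · left
      simp only [hBset, Set.mem_compl_iff, Set.mem_iInter, Set.mem_setOf_eq] at hω
      push_neg at hω
      obtain ⟨γ, hR, hltB⟩ := hω
      obtain ⟨hchain, h0γ, ⟨z, hhead, hadjz⟩, hlast⟩ := hR
      cases γ with
      | nil => simp at hhead
      | cons w rest =>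
        simp only [List.head?_cons, Option.some_inj] at hhead
        subst hhead
        have hpath : IsPathFrom ((0 : Vert d) :: w :: rest) 0 (axisPt d n) := by
          refine ⟨List.isChain_cons_cons.2 ⟨hadjz, hchain⟩, rfl, ?_⟩
          rw [List.getLast?_cons_cons]
          exact hlast
        have hfle : fpt (τ ω) 0 (axisPt d n) ≤ pathTime (τ ω) ((0 : Vert d) :: w :: rest) :=
          csInf_le (fptSet_bddBelow _ (hnonneg ω) _ _) ⟨_, hpath, rfl⟩
        obtain ⟨e, heES, hes⟩ := hES_cover w hadjz
        have hτw : τ ω s(0, w) < (ε/2) * n := by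
          by_contra hge
          refine hU (Set.mem_biUnion heES ?_)
          rw [Set.mem_setOf_eq, hes]
          exact not_lt.1 hge
        rw [pathTime_cons_cons] at hfle
        simp only [hCset, Set.mem_setOf_eq]
        have hn1 : (1 : ℝ) ≤ n := by exact_mod_cast hn
        have heq : (ε/2) * (n:ℝ) + (tc - ε) * n = (tc - ε/2) * n := by ring
        calc fpt (τ ω) 0 (axisPt d n) ≤ τ ω s(0, w) + pathTime (τ ω) (w :: rest) := hfle
          _ < (ε/2) * n + (tc - ε) * n := by
              have := hnonneg ω
              exact add_lt_add_of_lt_of_le hτw hltB.le |>.trans_le le_rfl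
          _ = (tc - ε/2) * n := heq
  -- eventual lower bound for μ (Bset n)
  have hB_half : ∀ᶠ n : ℕ in atTop, ENNReal.ofReal (1/2) ≤ μ (Bset n) := by
    have h4 : Tendsto (fun n : ℕ => (ε/4) * (n:ℝ)) atTop atTop :=
      Tendsto.const_mul_atTop (by positivity) (tendsto_natCast_atTop_atTop (R := ℝ))
    have hBtail : ∀ᶠ n : ℕ in atTop, μ ((Bset n)ᶜ) ≤
        μ (Cset n) + (ES.card : ENNReal) *
          ENNReal.ofReal (c₂ * Real.exp (-α * ((ε/4) * (n:ℝ)) ^ r)) := by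
      filter_upwards [eventually_ge_atTop 1, h4.eventually_ge_atTop t₀] with n hn ht
      refine (measure_mono (hBc_sub n hn)).trans ?_
      refine (measure_union_le _ _).trans (add_le_add le_rfl ?_)
      refine (measure_biUnion_finset_le _ _).trans ?_
      have hterm : ∀ e ∈ ES, μ {ω | (ε/2) * (n:ℝ) ≤ τ ω (e : EdgeSet d).1} ≤
          ENNReal.ofReal (c₂ * Real.exp (-α * ((ε/4) * (n:ℝ)) ^ r)) := by
        intro e _
        rw [hval e]
        have hn1 : (1 : ℝ) ≤ n := by exact_mod_cast hn
        have hltq : (ε/4) * (n:ℝ) < (ε/2) * n := by nlinarith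
        have hsub : {ω | (ε/2) * (n:ℝ) ≤ τ ω s(0, unitVec d)} ⊆
            {ω | (ε/4) * (n:ℝ) < τ ω s(0, unitVec d)} := by
          intro ω hω
          exact lt_of_lt_of_le hltq hω
        refine (measure_mono hsub).trans ?_
        have hfin : μ {ω | (ε/4) * (n:ℝ) < τ ω s(0, unitVec d)} ≠ ⊤ := measure_ne_top μ _
        rw [← ENNReal.ofReal_toReal hfin]
        exact ENNReal.ofReal_le_ofReal (ht₀ _ ht).2
      calc ∑ e ∈ ES, μ {ω | (ε/2) * (n:ℝ) ≤ τ ω (e : EdgeSet d).1}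
          ≤ ∑ _e ∈ ES, ENNReal.ofReal (c₂ * Real.exp (-α * ((ε/4) * (n:ℝ)) ^ r)) :=
            Finset.sum_le_sum hterm
        _ = (ES.card : ENNReal) *
            ENNReal.ofReal (c₂ * Real.exp (-α * ((ε/4) * (n:ℝ)) ^ r)) := by
            rw [Finset.sum_const, nsmul_eq_mul]
    have hexp : Tendsto (fun n : ℕ => c₂ * Real.exp (-α * ((ε/4) * (n:ℝ)) ^ r))
        atTop (nhds 0) := by
      have hrtop : Tendsto (fun n : ℕ => ((ε/4) * (n:ℝ)) ^ r) atTop atTop :=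
        (tendsto_rpow_atTop hr0).comp h4
      have hbot : Tendsto (fun n : ℕ => -α * ((ε/4) * (n:ℝ)) ^ r) atTop atBot := by
        simp only [neg_mul]
        exact tendsto_neg_atTop_atBot.comp (Tendsto.const_mul_atTop hα hrtop)
      have hexp0 : Tendsto (fun n : ℕ => Real.exp (-α * ((ε/4) * (n:ℝ)) ^ r))
          atTop (nhds 0) := Real.tendsto_exp_atBot.comp hbot
      have := hexp0.const_mul c₂
      simpa using this
    have h2 : Tendsto (fun n : ℕ =>
        ENNReal.ofReal (c₂ * Real.exp (-α * ((ε/4) * (n:ℝ)) ^ r))) atTop (nhds 0) := by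
      have := ENNReal.tendsto_ofReal hexp
      simpa using this
    have h3 : Tendsto (fun n : ℕ => (ES.card : ENNReal) *
        ENNReal.ofReal (c₂ * Real.exp (-α * ((ε/4) * (n:ℝ)) ^ r))) atTop (nhds 0) := by
      have := ENNReal.Tendsto.const_mul h2 (Or.inr (ENNReal.natCast_ne_top ES.card))
      simpa using this
    have htendsum : Tendsto (fun n : ℕ => μ (Cset n) + (ES.card : ENNReal) *
        ENNReal.ofReal (c₂ * Real.exp (-α * ((ε/4) * (n:ℝ)) ^ r))) atTop (nhds 0) := by
      have := hCtend.add h3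
      simpa using this
    have hlt2 : ∀ᶠ n : ℕ in atTop, μ (Cset n) + (ES.card : ENNReal) *
        ENNReal.ofReal (c₂ * Real.exp (-α * ((ε/4) * (n:ℝ)) ^ r)) <
        ENNReal.ofReal (1/2) :=
      htendsum.eventually_lt_const (ENNReal.ofReal_pos.2 (by norm_num))
    filter_upwards [hBtail, hlt2] with n hone htwo
    have hcompl : μ ((Bset n)ᶜ) ≤ ENNReal.ofReal (1/2) := hone.trans htwo.le
    have hBmeas : MeasurableSet (Bset n) := hMT_le _ (hB_measT n)
    have hsum : μ (Bset n) + μ ((Bset n)ᶜ) = 1 := prob_add_prob_compl hBmeas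
    by_contra hcon
    push_neg at hcon
    have h5 : μ (Bset n) + μ ((Bset n)ᶜ) < ENNReal.ofReal (1/2) + ENNReal.ofReal (1/2) :=
      lt_of_le_of_lt (add_le_add_right hcompl _)
        (ENNReal.add_lt_add_right ENNReal.ofReal_ne_top hcon)
    have h6 : ENNReal.ofReal (1/2) + ENNReal.ofReal (1/2) = 1 := by
      rw [← ENNReal.ofReal_add (by norm_num) (by norm_num)]
      norm_num
    rw [hsum, h6] at h5
    exact lt_irrefl _ h5
  -- the constant in the subexponential correction
  set K : ℝ := 2*(d:ℝ)*Real.log c₁ + Real.log (1/2) with hK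
  have hθn_top : Tendsto (fun n : ℕ => θ * (n:ℝ)) atTop atTop :=
    Tendsto.const_mul_atTop hθpos (tendsto_natCast_atTop_atTop (R := ℝ))
  have hKtend : Tendsto (fun n : ℕ => K / (n:ℝ)^r) atTop (nhds 0) :=
    Tendsto.div_atTop tendsto_const_nhds
      ((tendsto_rpow_atTop hr0).comp (tendsto_natCast_atTop_atTop (R := ℝ)))
  have hKev : ∀ᶠ n : ℕ in atTop, -(δ/2) ≤ K / (n:ℝ)^r := by
    filter_upwards [hKtend.eventually (eventually_gt_nhds
      (show -(δ/2) < 0 by linarith))] with n hn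
    exact hn.le
  -- the main eventual lower bound
  have hev_main : ∀ᶠ n : ℕ in atTop,
      -(2*(d:ℝ)*α*ξ^r) - δ ≤
        Real.log (μ {ω | (tc + ξ) * n < fpt (τ ω) 0 (axisPt d n)}).toReal / (n:ℝ)^r := by
    filter_upwards [eventually_ge_atTop 1, hθn_top.eventually_ge_atTop t₀, hB_half, hKev]
      with n hn ht hB2 hKn
    have hn1 : (1:ℝ) ≤ n := by exact_mod_cast hn
    have hnpos : (0:ℝ) < n := by linarith
    have hnr : (0:ℝ) < (n:ℝ)^r := Real.rpow_pos_of_pos hnpos r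
    set qlb : ℝ := c₁ * Real.exp (-α * (θ*(n:ℝ))^r) with hqlb
    have hqlbpos : 0 < qlb := by positivity
    have hq1 : qlb ≤ (μ {ω | θ*(n:ℝ) ≤ τ ω s(0, unitVec d)}).toReal := by
      refine ((ht₀ _ ht).1).trans ?_
      refine ENNReal.toReal_mono (measure_ne_top μ _) (measure_mono ?_)
      intro ω hω
      simp only [Set.mem_setOf_eq] at hω ⊢
      exact hω.le
    have hq2 : (μ {ω | θ*(n:ℝ) ≤ τ ω s(0, unitVec d)}).toReal ≤ 1 := by
      rw [← ENNReal.toReal_one]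
      exact ENNReal.toReal_mono ENNReal.one_ne_top prob_le_one
    have hqlb1 : qlb ≤ 1 := hq1.trans hq2
    have hmE : qlb ^ (2*d) * (1/2) ≤
        (μ {ω | (tc + ξ) * n < fpt (τ ω) 0 (axisPt d n)}).toReal := by
      have hstep2 : (μ (Aset n ∩ Bset n)).toReal ≤
          (μ {ω | (tc + ξ) * n < fpt (τ ω) 0 (axisPt d n)}).toReal :=
        ENNReal.toReal_mono (measure_ne_top μ _) (measure_mono (hincl n hn))
      have hstep3 : (μ (Aset n ∩ Bset n)).toReal
          = (μ (Aset n)).toReal * (μ (Bset n)).toReal := by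
        rw [hAB n, ENNReal.toReal_mul]
      have hstep4 : (μ (Aset n)).toReal
          = (μ {ω | θ*(n:ℝ) ≤ τ ω s(0, unitVec d)}).toReal ^ ES.card := by
        rw [hAprod n, ENNReal.toReal_pow]
      have hB3 : (1:ℝ)/2 ≤ (μ (Bset n)).toReal := by
        have := ENNReal.toReal_mono (measure_ne_top μ _) hB2
        rwa [ENNReal.toReal_ofReal (by norm_num)] at this
      have hA3 : qlb ^ (2*d) ≤ (μ (Aset n)).toReal := by
        rw [hstep4]
        calc qlb ^ (2*d) ≤ qlb ^ ES.card :=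
              pow_le_pow_of_le_one hqlbpos.le hqlb1 hES_card
          _ ≤ (μ {ω | θ*(n:ℝ) ≤ τ ω s(0, unitVec d)}).toReal ^ ES.card :=
              pow_le_pow_left₀ hqlbpos.le hq1 _
      calc qlb ^ (2*d) * (1/2)
          ≤ (μ (Aset n)).toReal * (μ (Bset n)).toReal :=
            mul_le_mul hA3 hB3 (by norm_num) ENNReal.toReal_nonneg
        _ = (μ (Aset n ∩ Bset n)).toReal := hstep3.symm
        _ ≤ _ := hstep2
    have hlog1 : Real.log (qlb ^ (2*d) * (1/2)) ≤
        Real.log (μ {ω | (tc + ξ) * n < fpt (τ ω) 0 (axisPt d n)}).toReal :=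
      Real.log_le_log (by positivity) hmE
    have hlog2 : Real.log (qlb ^ (2*d) * (1/2))
        = 2*(d:ℝ)*Real.log qlb + Real.log (1/2) := by
      rw [Real.log_mul (pow_ne_zero _ hqlbpos.ne') (by norm_num), Real.log_pow]
      push_cast; ring
    have hpowr : (θ*(n:ℝ))^r = θ^r * (n:ℝ)^r :=
      Real.mul_rpow hθpos.le (Nat.cast_nonneg n)
    have hlog' : Real.log qlb = Real.log c₁ - α*(θ^r*(n:ℝ)^r) := by
      rw [hqlb, Real.log_mul hc₁.ne' (Real.exp_ne_zero _), Real.log_exp, hpowr]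
      ring
    have hX : K - 2*(d:ℝ)*α*θ^r*(n:ℝ)^r ≤
        Real.log (μ {ω | (tc + ξ) * n < fpt (τ ω) 0 (axisPt d n)}).toReal := by
      calc K - 2*(d:ℝ)*α*θ^r*(n:ℝ)^r
          = 2*(d:ℝ)*Real.log qlb + Real.log (1/2) := by rw [hlog', hK]; ring
        _ = Real.log (qlb ^ (2*d) * (1/2)) := hlog2.symm
        _ ≤ _ := hlog1
    have hdiv : (K - 2*(d:ℝ)*α*θ^r*(n:ℝ)^r) / (n:ℝ)^r ≤
        Real.log (μ {ω | (tc + ξ) * n < fpt (τ ω) 0 (axisPt d n)}).toReal / (n:ℝ)^r :=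
      (div_le_div_iff_of_pos_right hnr).2 hX
    have hsplit : (K - 2*(d:ℝ)*α*θ^r*(n:ℝ)^r) / (n:ℝ)^r = K/(n:ℝ)^r - 2*(d:ℝ)*α*θ^r := by
      rw [sub_div, mul_div_assoc, div_self hnr.ne', mul_one]
    rw [hsplit] at hdiv
    have hfin : -(2*(d:ℝ)*α*ξ^r) - δ ≤ K/(n:ℝ)^r - 2*(d:ℝ)*α*θ^r := by
      linarith
    linarith
  -- conclude via the liminf
  refine le_liminf_of_le ?_ hev_main
  apply Filter.IsBoundedUnder.isCoboundedUnder_ge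
  refine ⟨0, eventually_map.2 ?_⟩
  filter_upwards with n
  have h1 : Real.log (μ {ω | (tc + ξ) * n < fpt (τ ω) 0 (axisPt d n)}).toReal ≤ 0 := by
    apply Real.log_nonpos ENNReal.toReal_nonneg
    rw [← ENNReal.toReal_one]
    exact ENNReal.toReal_mono ENNReal.one_ne_top prob_le_one
  have h2 : (0:ℝ) ≤ (n:ℝ)^r := Real.rpow_nonneg (Nat.cast_nonneg n) r
  exact div_nonpos_of_nonpos_of_nonneg h1 h2
end
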